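/- Let Σ ⊆ {T, B, 4, D} with 4 ∈ Σ. For every KΣ-consistent α ∈ C_{h+1,n} there is exactly one KΣ-consistent formula α′ ∈ C_{h,n} such that ⊢_{KΣ} α→α′. -/

import Mathlib

namespace ModalSOA

/-- Modal formulas: propositional variables, propositional constants, ⊥, →, □. -/
inductive Formula : Type
  | var : ℕ → Formula
  | const : ℕ → Formula
  | bot : Formula
  | imp : Formula → Formula → Formula
  | box : Formula → Formula
deriving DecidableEq

namespace Formula

/-- ¬φ := φ → ⊥ -/
def neg (φ : Formula) : Formula := φ.imp bot

/-- ⊤ := ¬⊥ -/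
def top : Formula := bot.neg

/-- ◇φ := ¬□¬φ -/
def dia (φ : Formula) : Formula := φ.neg.box.neg

/-- φ ∧ ψ := ¬(φ → ¬ψ) -/
def and (φ ψ : Formula) : Formula := (φ.imp ψ.neg).neg

/-- φ ∨ ψ := ¬φ → ψ -/
def or (φ ψ : Formula) : Formula := φ.neg.imp ψ

/-- Uniform substitution: substitute formulas for propositional variables,
    leaving propositional constants fixed. -/
def subst (σ : ℕ → Formula) : Formula → Formula
  | var n => σ n
  | const n => const n
  | bot => bot
  | imp φ ψ => imp (φ.subst σ) (ψ.subst σ)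
  | box φ => box (φ.subst σ)

end Formula

open Formula

/-- The propositional variable p. -/
def pv : Formula := .var 0
/-- The propositional variable q. -/
def qv : Formula := .var 1
/-- The propositional variable r. -/
def rv : Formula := .var 2

/-- The seven extra modal axioms considered: T, B, 4, 5, D, .2, L. -/
inductive ModalAxiom : Type
  | T | B | four | five | D | dot2 | L
deriving DecidableEq

/-- The modal formula corresponding to each axiom name. -/
def ModalAxiom.fml : ModalAxiom → Formula
  | .T => pv.box.imp pv                       -- □p → p
  | .B => pv.imp pv.dia.box                   -- p → □◇p
  | .four => pv.box.imp pv.box.box            -- □p → □□p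
  | .five => pv.dia.imp pv.dia.box            -- ◇p → □◇p
  | .D => pv.box.imp pv.dia                   -- □p → ◇p
  | .dot2 => pv.box.dia.imp pv.dia.box        -- ◇□p → □◇p
  | .L => (pv.box.imp pv).box.imp pv.box      -- □(□p→p) → □p

/-- Hilbert-style provability for the normal modal logic with extra axioms `Ax`:
classical propositional axioms, K, members of `Ax`, modus ponens, necessitation,
and uniform substitution. -/
inductive Prv (Ax : Set Formula) : Formula → Prop
  | ax1 : Prv Ax (pv.imp (qv.imp pv))
  | ax2 : Prv Ax ((pv.imp (qv.imp rv)).imp ((pv.imp qv).imp (pv.imp rv)))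
  | ax3 : Prv Ax ((pv.neg.imp qv.neg).imp (qv.imp pv))
  | axK : Prv Ax ((pv.imp qv).box.imp (pv.box.imp qv.box))
  | extra {φ} : φ ∈ Ax → Prv Ax φ
  | mp {φ ψ} : Prv Ax (φ.imp ψ) → Prv Ax φ → Prv Ax ψ
  | nec {φ} : Prv Ax φ → Prv Ax φ.box
  | subst {φ} (σ : ℕ → Formula) : Prv Ax φ → Prv Ax (φ.subst σ)

/-- The axiom set of the logic KΣ. -/
def KAxioms (Sig : Set ModalAxiom) : Set Formula := ModalAxiom.fml '' Sig

/-- The axiom set of GL = K{L}. -/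
def GLAx : Set Formula := KAxioms {ModalAxiom.L}

/-- Conjunction of a list of formulas (empty conjunction is ⊤). -/
def listConj : List Formula → Formula
  | [] => top
  | [φ] => φ
  | φ :: ψ :: l => φ.and (listConj (ψ :: l))

/-- Disjunction of a list of formulas (empty disjunction is ⊥). -/
def listDisj : List Formula → Formula
  | [] => bot
  | [φ] => φ
  | φ :: ψ :: l => φ.or (listDisj (ψ :: l))

/-- Pbl(Γ, φ): there are ψ₁,…,ψₙ ∈ Γ with ⊢ (ψ₁∧…∧ψₙ) → φ. -/
def Pbl (Ax : Set Formula) (Γ : Set Formula) (φ : Formula) : Prop :=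
  ∃ l : List Formula, (∀ ψ ∈ l, ψ ∈ Γ) ∧ Prv Ax ((listConj l).imp φ)

/-- A formula φ is consistent if ⊬ φ → ⊥. -/
def FmlConsistent (Ax : Set Formula) (φ : Formula) : Prop := ¬ Prv Ax (φ.imp bot)

/-- A set Γ is consistent if ¬Pbl(Γ, ⊥). -/
def SetConsistent (Ax : Set Formula) (Γ : Set Formula) : Prop := ¬ Pbl Ax Γ bot

/-- Γ is maximally consistent: consistent, closed under deduction, and for
every φ, φ ∈ Γ or ¬φ ∈ Γ. -/
def MaxConsistent (Ax : Set Formula) (Γ : Set Formula) : Prop :=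
  SetConsistent Ax Γ ∧ (∀ φ, Pbl Ax Γ φ → φ ∈ Γ) ∧ (∀ φ, φ ∈ Γ ∨ φ.neg ∈ Γ)

/-- Euclidean relation. -/
def Euclidean {W : Type*} (R : W → W → Prop) : Prop := ∀ ⦃x y z⦄, R x y → R x z → R y z

/-- Serial relation. -/
def Serial {W : Type*} (R : W → W → Prop) : Prop := ∀ x, ∃ y, R x y

/-- Directed relation. -/
def Directed {W : Type*} (R : W → W → Prop) : Prop :=
  ∀ ⦃x y z⦄, R x y → R x z → ∃ s, R y s ∧ R z s

/-- No infinite ascending R-sequence. -/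
def NoInfiniteAscent {W : Type*} (R : W → W → Prop) : Prop :=
  ¬ ∃ f : ℕ → W, ∀ n, R (f n) (f (n + 1))

/-- A frame (with relation R) is appropriate to a given modal axiom. -/
def AppropriateTo {W : Type*} (R : W → W → Prop) : ModalAxiom → Prop
  | .T => Reflexive R
  | .B => Symmetric R
  | .four => Transitive R
  | .five => Euclidean R
  | .D => Serial R
  | .dot2 => Directed R
  | .L => Transitive R ∧ NoInfiniteAscent R

/-- A frame is appropriate to Σ if it is appropriate to each member of Σ. -/
def Appropriate {W : Type*} (R : W → W → Prop) (Sig : Set ModalAxiom) : Prop :=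
  ∀ a ∈ Sig, AppropriateTo R a

/-- A valuation on a frame: truth values for all formulas, respecting the
Kripke clauses for ⊥, →, □. -/
structure Valuation {W : Type*} (R : W → W → Prop) where
  val : W → Formula → Bool
  val_bot : ∀ w, val w Formula.bot = false
  val_imp : ∀ w φ ψ, val w (φ.imp ψ) = (!(val w φ) || val w ψ)
  val_box : ∀ w φ, val w φ.box = true ↔ ∀ v, R w v → val v φ = true

/-- F ⊩ φ : every valuation on the frame makes φ true at every world. -/
def FrameForces {W : Type*} (R : W → W → Prop) (φ : Formula) : Prop :=
  ∀ V : Valuation R, ∀ w : W, V.val w φ = true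

/-- Height of a formula. -/
def ht : Formula → ℕ
  | .imp φ ψ => max (ht φ) (ht ψ)
  | .box φ => 1 + ht φ
  | _ => 0

/-- Order of a formula, with respect to the fixed enumeration `atom` of
atomic formulas. -/
def ord : Formula → ℕ
  | .bot => 0
  | .var k => 2 * k + 1
  | .const k => 2 * k + 2
  | .imp φ ψ => max (ord φ) (ord ψ)
  | .box φ => ord φ

/-- A fixed enumeration p₀, p₁, … of the atomic formulas (⊥, variables and
constants), with `ord (atom n) = n`. -/
def atom : ℕ → Formula
  | 0 => .bot
  | n + 1 => if n % 2 = 0 then .var (n / 2) else .const (n / 2)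

/-- φ ∈ L_{h,n}. -/
def InL (h n : ℕ) (φ : Formula) : Prop := ht φ ≤ h ∧ ord φ ≤ n

/-- T̂ for T ⊆ {p₀,…,pₙ}: the conjunction of the atoms in T and the negations
of the remaining atoms among p₀,…,pₙ. -/
def hatT (n : ℕ) (T : List ℕ) : Formula :=
  listConj ((List.range (n + 1)).map (fun i => if i ∈ T then atom i else (atom i).neg))

/-- The canonical formula α_{S,T} = (∧_{ψ∈S} ◇ψ) ∧ □(∨S) ∧ T̂. -/
def canonAlpha (n : ℕ) (S : List Formula) (T : List ℕ) : Formula :=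
  (listConj (S.map dia)).and (((listDisj S).box).and (hatT n T))

/-- The canonical formulas C_{h,n} (as a finite list). -/
def C : ℕ → ℕ → List Formula
  | 0, n => (List.range (n + 1)).sublists.map (hatT n)
  | h + 1, n => (C h n).sublists.flatMap
      (fun S => (List.range (n + 1)).sublists.map (fun T => canonAlpha n S T))

/-- ⊕X := ∨_{α∈X}(α ∧ ∧_{β∈X\{α}} ¬β). -/
def bigOplus (X : List Formula) : Formula :=
  listDisj (X.map (fun α => α.and (listConj ((X.filter (· ≠ α)).map neg))))

/-- The set of subformulas of a formula. -/
def sub : Formula → Finset Formula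
  | .imp φ ψ => insert (Formula.imp φ ψ) (sub φ ∪ sub ψ)
  | .box φ => insert φ.box (sub φ)
  | a => {a}

/-- (W, R, V) is a weak Kripke model of φ: W nonempty and V satisfies the
valuation clauses for ⊥, →, □ on the subformulas of φ. -/
structure IsWeakKripkeModel (φ : Formula) {W : Type*} (R : W → W → Prop)
    (V : W → Formula → Bool) : Prop where
  nonempty : Nonempty W
  val_bot : ∀ w, Formula.bot ∈ sub φ → V w Formula.bot = false
  val_imp : ∀ w ψ θ, ψ.imp θ ∈ sub φ → V w (ψ.imp θ) = (!(V w ψ) || V w θ)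
  val_box : ∀ w ψ, ψ.box ∈ sub φ → (V w ψ.box = true ↔ ∀ v, R w v → V v ψ = true)

/-- W̃ : the KΣ-consistent α ∈ C_{h+1,n} with ⊢ α → φ. -/
def tildeW (Ax : Set Formula) (φ : Formula) (h n : ℕ) : Set Formula :=
  {α | α ∈ C (h + 1) n ∧ FmlConsistent Ax α ∧ Prv Ax (α.imp φ)}

/-- α →c β iff α ∧ ◇β is consistent. -/
def relC (Ax : Set Formula) (α β : Formula) : Prop := FmlConsistent Ax (α.and β.dia)

/-- Ṽ(α, ψ) = 1 iff ⊢ α → ψ. -/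
noncomputable def tildeV (Ax : Set Formula) (α ψ : Formula) : Bool :=
  @decide _ (Classical.propDecidable (Prv Ax (α.imp ψ)))

-- α′ : the unique consistent member of C_{h,n} provably implied by α.
open Classical in
noncomputable def prime (Ax : Set Formula) (h n : ℕ) (α : Formula) : Formula :=
  if hx : ∃ α', α' ∈ C h n ∧ FmlConsistent Ax α' ∧ Prv Ax (α.imp α') then hx.choose
  else Formula.bot

/-- α →m β iff ⊢ α → ◇β′ and every ξ ∈ C_{h,n} with ⊢ β → ◇ξ satisfies ⊢ α → ◇ξ. -/
def relM (Ax : Set Formula) (h n : ℕ) (α β : Formula) : Prop :=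
  Prv Ax (α.imp (prime Ax h n β).dia) ∧
  ∀ ξ ∈ C h n, Prv Ax (β.imp ξ.dia) → Prv Ax (α.imp ξ.dia)

/-- α →d β (for GL) iff α →m β and some γ ∈ C_{h,n} has ⊢ α → ◇γ and ⊢ β → □¬γ. -/
def relD (h n : ℕ) (α β : Formula) : Prop :=
  relM GLAx h n α β ∧
  ∃ γ ∈ C h n, Prv GLAx (α.imp γ.dia) ∧ Prv GLAx (β.imp γ.neg.box)


section Hilbert

open Formula

variable {Ax : Set Formula} {φ ψ χ : Formula}

private lemma A1 (φ ψ : Formula) : Prv Ax (φ.imp (ψ.imp φ)) := by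
  have h := Prv.subst (Ax := Ax) (fun k => if k = 0 then φ else ψ) Prv.ax1
  simpa [Formula.subst, pv, qv] using h

private lemma A2 (φ ψ χ : Formula) :
    Prv Ax ((φ.imp (ψ.imp χ)).imp ((φ.imp ψ).imp (φ.imp χ))) := by
  have h := Prv.subst (Ax := Ax)
    (fun k => if k = 0 then φ else if k = 1 then ψ else χ) Prv.ax2
  simpa [Formula.subst, pv, qv, rv] using h

private lemma A3 (φ ψ : Formula) :
    Prv Ax ((φ.neg.imp ψ.neg).imp (ψ.imp φ)) := by
  have h := Prv.subst (Ax := Ax) (fun k => if k = 0 then φ else ψ) Prv.ax3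
  simpa [Formula.subst, pv, qv, Formula.neg] using h

private lemma AK (φ ψ : Formula) :
    Prv Ax (((φ.imp ψ).box).imp (φ.box.imp ψ.box)) := by
  have h := Prv.subst (Ax := Ax) (fun k => if k = 0 then φ else ψ) Prv.axK
  simpa [Formula.subst, pv, qv] using h

private lemma mpd (h1 : Prv Ax (φ.imp (ψ.imp χ))) (h2 : Prv Ax (φ.imp ψ)) :
    Prv Ax (φ.imp χ) := ((A2 φ ψ χ).mp h1).mp h2

private lemma pid : Prv Ax (φ.imp φ) := mpd (A1 φ (φ.imp φ)) (A1 φ φ)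

private lemma wk (h : Prv Ax ψ) : Prv Ax (φ.imp ψ) := (A1 ψ φ).mp h

private lemma comp (h1 : Prv Ax (φ.imp ψ)) (h2 : Prv Ax (ψ.imp χ)) :
    Prv Ax (φ.imp χ) := mpd (wk h2) h1

private lemma pswap (h : Prv Ax (φ.imp (ψ.imp χ))) : Prv Ax (ψ.imp (φ.imp χ)) :=
  comp (A1 ψ φ) ((A2 φ ψ χ).mp h)

private lemma compL (h : Prv Ax (φ.imp ψ)) : Prv Ax ((ψ.imp χ).imp (φ.imp χ)) :=
  comp (A1 (ψ.imp χ) φ) ((pswap (A2 φ ψ χ)).mp h)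

private lemma compR (h : Prv Ax (ψ.imp χ)) : Prv Ax ((φ.imp ψ).imp (φ.imp χ)) :=
  (A2 φ ψ χ).mp (wk h)

private lemma dni : Prv Ax (φ.imp φ.neg.neg) := pswap (pid (φ := φ.neg))

private lemma expl : Prv Ax (Formula.bot.imp φ) :=
  (A3 φ Formula.bot).mp (wk (pid (φ := Formula.bot)))

private lemma dne : Prv Ax (φ.neg.neg.imp φ) :=
  (A3 φ φ.neg.neg).mp (dni (φ := φ.neg))

private lemma andE1 : Prv Ax ((φ.and ψ).imp φ) :=
  (A3 φ (φ.imp ψ.neg).neg).mp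
    (comp (compR (expl (φ := ψ.neg))) (dni (φ := φ.imp ψ.neg)))

private lemma andE2 : Prv Ax ((φ.and ψ).imp ψ) :=
  (A3 ψ (φ.imp ψ.neg).neg).mp
    (comp (A1 ψ.neg φ) (dni (φ := φ.imp ψ.neg)))

private lemma andI (h1 : Prv Ax (χ.imp φ)) (h2 : Prv Ax (χ.imp ψ)) :
    Prv Ax (χ.imp (φ.and ψ)) :=
  pswap (comp (compL h1) ((pswap (A2 χ ψ Formula.bot)).mp h2))

private lemma orI1 : Prv Ax (φ.imp (φ.or ψ)) :=
  pswap (compR (expl (φ := ψ)))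

private lemma orI2 : Prv Ax (ψ.imp (φ.or ψ)) := A1 ψ φ.neg

private lemma orE (h1 : Prv Ax (φ.imp χ)) (h2 : Prv Ax (ψ.imp χ)) :
    Prv Ax ((φ.or ψ).imp χ) := by
  have w1 : Prv Ax (χ.neg.imp φ.neg) := compL h1
  have w2 : Prv Ax ((φ.neg.imp χ).imp (χ.neg.imp χ)) := compL w1
  have w3 : Prv Ax ((χ.neg.imp χ).imp (χ.neg.imp Formula.bot)) :=
    (A2 χ.neg χ Formula.bot).mp (pid (φ := χ.neg))
  have w5 : Prv Ax (χ.neg.imp (φ.neg.imp χ).neg) := pswap (comp w2 w3)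
  exact comp (compR h2) ((A3 χ (φ.neg.imp χ)).mp w5)

private lemma boxMono (h : Prv Ax (φ.imp ψ)) : Prv Ax (φ.box.imp ψ.box) :=
  (AK φ ψ).mp h.nec

private lemma diaMono (h : Prv Ax (φ.imp ψ)) : Prv Ax (φ.dia.imp ψ.dia) :=
  compL (boxMono (compL h))

/-- from ⊢ ¬ψ conclude ⊢ ¬◇ψ -/
private lemma negDia (h : Prv Ax ψ.neg) : Prv Ax ψ.dia.neg :=
  Prv.mp (dni (φ := ψ.neg.box)) h.nec

private lemma boxNeg_negDia : Prv Ax (ψ.neg.box.imp ψ.dia.neg) :=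
  dni (φ := ψ.neg.box)

/-- combine ⊢ β→a, ⊢ γ→¬a to ⊢ β→¬γ. -/
private lemma combine {β γ a : Formula} (h1 : Prv Ax (β.imp a)) (h2 : Prv Ax (γ.imp a.neg)) :
    Prv Ax (β.imp γ.neg) := comp h1 (pswap h2)

/-- combine ⊢ β→¬a, ⊢ γ→a to ⊢ β→¬γ. -/
private lemma combine' {β γ a : Formula} (h1 : Prv Ax (β.imp a.neg)) (h2 : Prv Ax (γ.imp a)) :
    Prv Ax (β.imp γ.neg) := comp h1 (compL h2)

private lemma listConj_elim {l : List Formula} {x : Formula} (hx : x ∈ l) :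
    Prv Ax ((listConj l).imp x) := by
  induction l with
  | nil => simp at hx
  | cons a t ih =>
    cases t with
    | nil =>
      simp at hx
      subst hx
      exact pid
    | cons b t' =>
      rcases List.mem_cons.mp hx with h | h
      · subst h; exact andE1
      · exact comp andE2 (ih h)

private lemma listConj_intro {l : List Formula} {χ : Formula}
    (h : ∀ x ∈ l, Prv Ax (χ.imp x)) : Prv Ax (χ.imp (listConj l)) := by
  induction l with
  | nil => exact wk pid
  | cons a t ih =>
    cases t with
    | nil => exact h a (by simp)
    | cons b t' =>
      exact andI (h a (by simp)) (ih (fun x hx => h x (List.mem_cons_of_mem _ hx)))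

private lemma listDisj_intro {l : List Formula} {x : Formula} (hx : x ∈ l) :
    Prv Ax (x.imp (listDisj l)) := by
  induction l with
  | nil => simp at hx
  | cons a t ih =>
    cases t with
    | nil =>
      simp at hx
      subst hx
      exact pid
    | cons b t' =>
      rcases List.mem_cons.mp hx with h | h
      · subst h; exact orI1
      · exact comp (ih h) orI2

private lemma listDisj_elim {l : List Formula} {χ : Formula}
    (h : ∀ x ∈ l, Prv Ax (x.imp χ)) : Prv Ax ((listDisj l).imp χ) := by
  induction l with
  | nil => exact expl
  | cons a t ih =>
    cases t with
    | nil => exact h a (by simp)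
    | cons b t' =>
      exact orE (h a (by simp)) (ih (fun x hx => h x (List.mem_cons_of_mem _ hx)))

end Hilbert
section Struct

open Formula

/-- a sublist of a nodup list equals the filter of membership. -/
private lemma sublist_eq_filter {α : Type} [DecidableEq α] {s l : List α}
    (h : List.Sublist s l) (hl : l.Nodup) : s = l.filter (· ∈ s) := by
  induction h with
  | slnil => rfl
  | @cons l₁ l₂ a h ih =>
    have hnd := (List.nodup_cons.mp hl).2
    have hna : a ∉ l₁ := fun hmem => (List.nodup_cons.mp hl).1 (h.subset hmem)
    simp only [List.filter_cons]
    rw [if_neg (by simpa using hna)]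
    exact ih hnd
  | @cons_cons l₁ l₂ a h ih =>
    have hnd := (List.nodup_cons.mp hl).2
    have hal : a ∉ l₂ := (List.nodup_cons.mp hl).1
    have hfc : List.filter (fun x => decide (x ∈ a :: l₁)) l₂
        = List.filter (fun x => decide (x ∈ l₁)) l₂ := by
      apply List.filter_congr
      intro x hx
      have hxa : x ≠ a := fun he => hal (he ▸ hx)
      simp [List.mem_cons, hxa]
    rw [List.filter_cons, if_pos (by simp), hfc, ← ih hnd]

private lemma sublist_ext {α : Type} [DecidableEq α] {s₁ s₂ l : List α}
    (h1 : List.Sublist s₁ l) (h2 : List.Sublist s₂ l) (hl : l.Nodup)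
    (hm : ∀ x, x ∈ s₁ ↔ x ∈ s₂) : s₁ = s₂ := by
  rw [sublist_eq_filter h1 hl, sublist_eq_filter h2 hl]
  apply List.filter_congr
  intro x _
  simp [hm x]

private lemma and_inj {a b c d : Formula} (h : a.and b = c.and d) : a = c ∧ b = d := by
  simp only [Formula.and, Formula.neg, Formula.imp.injEq] at h
  exact ⟨h.1.1, h.1.2.1⟩

private lemma atom_ne_neg (i j : ℕ) : atom i ≠ (atom j).neg := by
  rcases i with _ | m
  · simp [atom, Formula.neg]
  · simp only [atom]
    split <;> simp [Formula.neg]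

private lemma listConj_map_inj {g₁ g₂ : ℕ → Formula} :
    ∀ l : List ℕ, listConj (l.map g₁) = listConj (l.map g₂) → ∀ i ∈ l, g₁ i = g₂ i := by
  intro l
  induction l with
  | nil => simp
  | cons a t ih =>
    cases t with
    | nil => simp [listConj]
    | cons b t' =>
      intro h i hi
      simp only [List.map_cons, listConj] at h
      obtain ⟨h1, h2⟩ := and_inj h
      rcases List.mem_cons.mp hi with rfl | hi'
      · exact h1
      · exact ih (by simpa [listConj] using h2) i hi'

private lemma hatT_inj {n : ℕ} {T₁ T₂ : List ℕ}
    (h1 : List.Sublist T₁ (List.range (n + 1))) (h2 : List.Sublist T₂ (List.range (n + 1)))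
    (h : hatT n T₁ = hatT n T₂) : T₁ = T₂ := by
  have key := listConj_map_inj (List.range (n + 1)) h
  apply sublist_ext h1 h2 (List.nodup_range)
  intro x
  constructor
  · intro hx
    have hxr : x ∈ List.range (n + 1) := h1.subset hx
    have := key x hxr
    by_contra hx2
    rw [if_pos hx, if_neg hx2] at this
    exact atom_ne_neg x x this
  · intro hx
    have hxr : x ∈ List.range (n + 1) := h2.subset hx
    have := key x hxr
    by_contra hx2
    rw [if_neg hx2, if_pos hx] at this
    exact atom_ne_neg x x this.symm

private lemma listConj_dia_inj :
    ∀ l₁ l₂ : List Formula, listConj (l₁.map Formula.dia) = listConj (l₂.map Formula.dia) →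
      l₁ = l₂ := by
  intro l₁
  induction l₁ with
  | nil =>
    intro l₂ h
    cases l₂ with
    | nil => rfl
    | cons b t =>
      cases t <;> simp [listConj, Formula.top, Formula.dia, Formula.and, Formula.neg] at h
  | cons a t ih =>
    intro l₂ h
    cases l₂ with
    | nil =>
      cases t <;> simp [listConj, Formula.top, Formula.dia, Formula.and, Formula.neg] at h
    | cons b s =>
      cases t with
      | nil =>
        cases s with
        | nil =>
          simp only [List.map_cons, List.map_nil, listConj] at h
          simp [Formula.dia, Formula.neg] at h
          simp [h]
        | cons c s' =>
          simp [listConj, Formula.dia, Formula.and, Formula.neg] at h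
      | cons c t' =>
        cases s with
        | nil =>
          simp [listConj, Formula.dia, Formula.and, Formula.neg] at h
        | cons d s' =>
          simp only [List.map_cons, listConj] at h
          obtain ⟨h1, h2⟩ := and_inj h
          have ha : a = b := by
            simpa [Formula.dia, Formula.neg] using h1
          have := ih (d :: s') (by simpa [listConj] using h2)
          rw [ha, this]

private lemma canonAlpha_inj {n : ℕ} {S₁ S₂ : List Formula} {T₁ T₂ : List ℕ}
    (hT₁ : List.Sublist T₁ (List.range (n + 1))) (hT₂ : List.Sublist T₂ (List.range (n + 1)))
    (h : canonAlpha n S₁ T₁ = canonAlpha n S₂ T₂) : S₁ = S₂ ∧ T₁ = T₂ := by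
  unfold canonAlpha at h
  obtain ⟨h1, h2⟩ := and_inj h
  obtain ⟨h3, h4⟩ := and_inj h2
  exact ⟨listConj_dia_inj _ _ h1, hatT_inj hT₁ hT₂ h4⟩

private lemma nodup_C : ∀ h n, (C h n).Nodup := by
  intro h
  induction h with
  | zero =>
    intro n
    refine List.Nodup.map_on ?_ (List.nodup_sublists.mpr (List.nodup_range))
    intro T₁ h1 T₂ h2 he
    exact hatT_inj (List.mem_sublists.mp h1) (List.mem_sublists.mp h2) he
  | succ h ih =>
    intro n
    rw [show C (h+1) n = (C h n).sublists.flatMap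
      (fun S => (List.range (n + 1)).sublists.map (fun T => canonAlpha n S T)) from rfl]
    rw [List.nodup_flatMap]
    constructor
    · intro S hS
      refine List.Nodup.map_on ?_ (List.nodup_sublists.mpr (List.nodup_range))
      intro T₁ h1 T₂ h2 he
      exact (canonAlpha_inj (List.mem_sublists.mp h1) (List.mem_sublists.mp h2) he).2
    · have hnd : ((C h n).sublists).Pairwise (· ≠ ·) := List.nodup_sublists.mpr (ih n)
      refine List.Pairwise.imp_of_mem ?_ hnd
      intro S₁ S₂ h1 h2 hne
      intro x hx1 hx2
      simp only [List.mem_map] at hx1 hx2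
      obtain ⟨T₁, hT₁, rfl⟩ := hx1
      obtain ⟨T₂, hT₂, he⟩ := hx2
      exact hne (canonAlpha_inj (List.mem_sublists.mp hT₂)
        (List.mem_sublists.mp hT₁) he).1.symm

private lemma mem_C_succ {h n : ℕ} {α : Formula} :
    α ∈ C (h + 1) n ↔ ∃ S, List.Sublist S (C h n) ∧ ∃ T, List.Sublist T (List.range (n + 1)) ∧
      α = canonAlpha n S T := by
  rw [show C (h+1) n = (C h n).sublists.flatMap
    (fun S => (List.range (n + 1)).sublists.map (fun T => canonAlpha n S T)) from rfl]
  simp only [List.mem_flatMap, List.mem_map, List.mem_sublists]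
  constructor
  · rintro ⟨S, hS, T, hT, rfl⟩; exact ⟨S, hS, T, hT, rfl⟩
  · rintro ⟨S, hS, T, hT, rfl⟩; exact ⟨S, hS, T, hT, rfl⟩

private lemma mem_C_zero {n : ℕ} {α : Formula} :
    α ∈ C 0 n ↔ ∃ T, List.Sublist T (List.range (n + 1)) ∧ α = hatT n T := by
  rw [show C 0 n = (List.range (n + 1)).sublists.map (hatT n) from rfl]
  simp only [List.mem_map, List.mem_sublists]
  constructor
  · rintro ⟨T, hT, rfl⟩; exact ⟨T, hT, rfl⟩
  · rintro ⟨T, hT, rfl⟩; exact ⟨T, hT, rfl⟩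

end Struct
section Main

open Formula

private lemma alpha_to_dia {Ax : Set Formula} {n : ℕ} {S : List Formula} {T : List ℕ}
    {ψ : Formula} (hψ : ψ ∈ S) : Prv Ax ((canonAlpha n S T).imp ψ.dia) :=
  comp (andE1 (φ := listConj (S.map Formula.dia)) (ψ := ((listDisj S).box).and (hatT n T)))
    (listConj_elim (List.mem_map_of_mem hψ))

private lemma alpha_to_box {Ax : Set Formula} {n : ℕ} {S : List Formula} {T : List ℕ} :
    Prv Ax ((canonAlpha n S T).imp ((listDisj S).box)) :=
  comp (andE2 (φ := listConj (S.map Formula.dia)) (ψ := ((listDisj S).box).and (hatT n T)))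
    andE1

private lemma alpha_to_hatT {Ax : Set Formula} {n : ℕ} {S : List Formula} {T : List ℕ} :
    Prv Ax ((canonAlpha n S T).imp (hatT n T)) :=
  comp (andE2 (φ := listConj (S.map Formula.dia)) (ψ := ((listDisj S).box).and (hatT n T)))
    andE2

private lemma hatT_elim {Ax : Set Formula} {n : ℕ} {T : List ℕ} {i : ℕ}
    (hi : i ∈ List.range (n + 1)) :
    Prv Ax ((hatT n T).imp (if i ∈ T then atom i else (atom i).neg)) := by
  have := listConj_elim (Ax := Ax)
    (l := (List.range (n + 1)).map (fun j => if j ∈ T then atom j else (atom j).neg))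
    (x := if i ∈ T then atom i else (atom i).neg) (List.mem_map_of_mem hi)
  exact this

/-- distinct canonical formulas of the same level are jointly inconsistent. -/
private lemma C_incompat {Ax : Set Formula} :
    ∀ (h : ℕ) {n : ℕ} {β γ : Formula}, β ∈ C h n → γ ∈ C h n → β ≠ γ →
      Prv Ax (β.imp γ.neg) := by
  intro h
  induction h with
  | zero =>
    intro n β γ hβ hγ hne
    obtain ⟨T₁, hT₁, rfl⟩ := mem_C_zero.mp hβ
    obtain ⟨T₂, hT₂, rfl⟩ := mem_C_zero.mp hγ
    have hT : ¬ ∀ i, i ∈ T₁ ↔ i ∈ T₂ := fun hall =>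
      hne (by rw [sublist_ext hT₁ hT₂ (List.nodup_range) hall])
    push_neg at hT
    obtain ⟨i, hi⟩ := hT
    by_cases h1 : i ∈ T₁ <;> by_cases h2 : i ∈ T₂
    · tauto
    · have hir : i ∈ List.range (n + 1) := hT₁.subset h1
      have hb : Prv Ax ((hatT n T₁).imp (atom i)) := by
        have := hatT_elim (Ax := Ax) (T := T₁) hir; rwa [if_pos h1] at this
      have hc : Prv Ax ((hatT n T₂).imp (atom i).neg) := by
        have := hatT_elim (Ax := Ax) (T := T₂) hir; rwa [if_neg h2] at this
      exact combine hb hc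
    · have hir : i ∈ List.range (n + 1) := hT₂.subset h2
      have hb : Prv Ax ((hatT n T₁).imp (atom i).neg) := by
        have := hatT_elim (Ax := Ax) (T := T₁) hir; rwa [if_neg h1] at this
      have hc : Prv Ax ((hatT n T₂).imp (atom i)) := by
        have := hatT_elim (Ax := Ax) (T := T₂) hir; rwa [if_pos h2] at this
      exact combine' hb hc
    · tauto
  | succ h ih =>
    intro n β γ hβ hγ hne
    obtain ⟨S₁, hS₁, T₁, hT₁, rfl⟩ := mem_C_succ.mp hβ
    obtain ⟨S₂, hS₂, T₂, hT₂, rfl⟩ := mem_C_succ.mp hγ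
    by_cases hS : ∀ ψ : Formula, ψ ∈ S₁ ↔ ψ ∈ S₂
    · by_cases hT : ∀ i, i ∈ T₁ ↔ i ∈ T₂
      · exact absurd (by rw [sublist_ext hS₁ hS₂ (nodup_C h n) hS,
          sublist_ext hT₁ hT₂ (List.nodup_range) hT]) hne
      · push_neg at hT
        obtain ⟨i, hi⟩ := hT
        by_cases h1 : i ∈ T₁ <;> by_cases h2 : i ∈ T₂
        · tauto
        · have hir : i ∈ List.range (n + 1) := hT₁.subset h1
          have hb : Prv Ax ((canonAlpha n S₁ T₁).imp (atom i)) := by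
            have := hatT_elim (Ax := Ax) (T := T₁) hir
            rw [if_pos h1] at this
            exact comp alpha_to_hatT this
          have hc : Prv Ax ((canonAlpha n S₂ T₂).imp (atom i).neg) := by
            have := hatT_elim (Ax := Ax) (T := T₂) hir
            rw [if_neg h2] at this
            exact comp alpha_to_hatT this
          exact combine hb hc
        · have hir : i ∈ List.range (n + 1) := hT₂.subset h2
          have hb : Prv Ax ((canonAlpha n S₁ T₁).imp (atom i).neg) := by
            have := hatT_elim (Ax := Ax) (T := T₁) hir
            rw [if_neg h1] at this
            exact comp alpha_to_hatT this
          have hc : Prv Ax ((canonAlpha n S₂ T₂).imp (atom i)) := by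
            have := hatT_elim (Ax := Ax) (T := T₂) hir
            rw [if_pos h2] at this
            exact comp alpha_to_hatT this
          exact combine' hb hc
        · tauto
    · push_neg at hS
      obtain ⟨ψ, hψ⟩ := hS
      by_cases h1 : ψ ∈ S₁
      · have h2 : ψ ∉ S₂ := by tauto
        have hβd : Prv Ax ((canonAlpha n S₁ T₁).imp ψ.dia) := alpha_to_dia h1
        have hdisj : Prv Ax ((listDisj S₂).imp ψ.neg) :=
          listDisj_elim (fun χ hχ =>
            pswap (ih (hS₁.subset h1) (hS₂.subset hχ) (fun he => h2 (he ▸ hχ))))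
        have hγb : Prv Ax ((canonAlpha n S₂ T₂).imp ψ.dia.neg) :=
          comp (comp alpha_to_box (boxMono hdisj)) boxNeg_negDia
        exact combine hβd hγb
      · have h2 : ψ ∈ S₂ := by tauto
        have hγd : Prv Ax ((canonAlpha n S₂ T₂).imp ψ.dia) := alpha_to_dia h2
        have hdisj : Prv Ax ((listDisj S₁).imp ψ.neg) :=
          listDisj_elim (fun χ hχ =>
            pswap (ih (hS₂.subset h2) (hS₁.subset hχ) (fun he => h1 (he ▸ hχ))))
        have hβb : Prv Ax ((canonAlpha n S₁ T₁).imp ψ.dia.neg) :=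
          comp (comp alpha_to_box (boxMono hdisj)) boxNeg_negDia
        exact combine' hβb hγd

private lemma exists_prime_aux {Ax : Set Formula} :
    ∀ (h : ℕ) {n : ℕ} {α : Formula}, α ∈ C (h + 1) n → FmlConsistent Ax α →
      ∃ α', α' ∈ C h n ∧ FmlConsistent Ax α' ∧ Prv Ax (α.imp α') := by
  intro h
  induction h with
  | zero =>
    intro n α hα hcons
    obtain ⟨S, hS, T, hT, rfl⟩ := mem_C_succ.mp hα
    exact ⟨hatT n T, mem_C_zero.mpr ⟨T, hT, rfl⟩,
      fun hbad => hcons (comp alpha_to_hatT hbad), alpha_to_hatT⟩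
  | succ h ih =>
    intro n α hα hcons
    obtain ⟨S, hS, T, hT, rfl⟩ := mem_C_succ.mp hα
    classical
    have hmem_cons : ∀ ψ ∈ S, FmlConsistent Ax ψ := by
      intro ψ hψ hbad
      exact hcons (comp (alpha_to_dia hψ) (negDia hbad))
    set S' := (C h n).filter (fun ξ => decide (∃ ψ ∈ S, Prv Ax (ψ.imp ξ))) with hS'def
    have hS'sub : List.Sublist S' (C h n) := List.filter_sublist
    have hmemS' : ∀ ξ, ξ ∈ S' ↔ ξ ∈ C h n ∧ ∃ ψ ∈ S, Prv Ax (ψ.imp ξ) := by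
      intro ξ
      simp [hS'def, List.mem_filter]
    have himp : Prv Ax ((canonAlpha n S T).imp (canonAlpha n S' T)) := by
      have c1 : Prv Ax ((canonAlpha n S T).imp (listConj (S'.map Formula.dia))) := by
        apply listConj_intro
        intro x hx
        obtain ⟨ξ, hξ, rfl⟩ := List.mem_map.mp hx
        obtain ⟨hξC, ψ, hψS, hpv⟩ := (hmemS' ξ).mp hξ
        exact comp (alpha_to_dia hψS) (diaMono hpv)
      have c2 : Prv Ax ((canonAlpha n S T).imp ((listDisj S').box)) := by
        have hd : Prv Ax ((listDisj S).imp (listDisj S')) := by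
          apply listDisj_elim
          intro ψ hψ
          obtain ⟨ψ', hψ'C, _, hprv⟩ := ih (hS.subset hψ) (hmem_cons ψ hψ)
          exact comp hprv (listDisj_intro ((hmemS' ψ').mpr ⟨hψ'C, ψ, hψ, hprv⟩))
        exact comp alpha_to_box (boxMono hd)
      exact andI c1 (andI c2 alpha_to_hatT)
    exact ⟨canonAlpha n S' T, mem_C_succ.mpr ⟨S', hS'sub, T, hT, rfl⟩,
      fun hbad => hcons (comp himp hbad), himp⟩

end Main
/-- For 4 ∈ Σ ⊆ {T,B,4,D} and KΣ-consistent α ∈ C_{h+1,n}, there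
is exactly one KΣ-consistent α′ ∈ C_{h,n} with ⊢ α→α′. -/
theorem prime_unique (Sig : Set ModalAxiom)
    (hSig : Sig ⊆ {ModalAxiom.T, ModalAxiom.B, ModalAxiom.four, ModalAxiom.D})
    (h4 : ModalAxiom.four ∈ Sig)
    (h n : ℕ) (α : Formula) (hα : α ∈ C (h + 1) n)
    (hcons : FmlConsistent (KAxioms Sig) α) :
    ∃! α' : Formula,
      α' ∈ C h n ∧ FmlConsistent (KAxioms Sig) α' ∧ Prv (KAxioms Sig) (α.imp α') := by
  obtain ⟨α', hmem, hcons', himp⟩ := exists_prime_aux h hα hcons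
  refine ⟨α', ⟨hmem, hcons', himp⟩, ?_⟩
  rintro y ⟨hy1, hy2, hy3⟩
  by_contra hne
  have hk : Prv (KAxioms Sig) (y.imp α'.neg) := C_incompat h hy1 hmem hne
  exact hcons (mpd (comp hy3 hk) himp)

end ModalSOA
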